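/- Let 2 ≤ d₁ ≤ d₂ be real numbers, and for i = 1, 2 let Ξᵢ ∈ [3/2, 2] satisfy dᵢ·(2Ξᵢ·e^{1/Ξᵢ} + Ξᵢ² − e^{2/Ξᵢ} − Ξᵢ²·e^{1/Ξᵢ}) = e^{2/Ξᵢ}. Then Ξ₂ ≤ Ξ₁; i.e., Ξ_d is decreasing in d. -/

import Mathlib

noncomputable def xiH (x : ℝ) : ℝ :=
  2 * x * Real.exp (-(1 / x)) + x ^ 2 * Real.exp (-(2 / x)) - 1
    - x ^ 2 * Real.exp (-(1 / x))

lemma xiH_hasDerivAt (x : ℝ) (hx : 0 < x) :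
    HasDerivAt xiH
      (Real.exp (-(1 / x)) * (1 + 2 / x - 2 * x)
        + (2 * x + 2) * Real.exp (-(2 / x))) x := by
  have hx0 : x ≠ 0 := ne_of_gt hx
  have hinv : HasDerivAt (fun y : ℝ => y⁻¹) (-(x ^ 2)⁻¹) x := hasDerivAt_inv hx0
  have h1 : HasDerivAt (fun y : ℝ => -(1 / y)) ((x ^ 2)⁻¹) x := by
    simpa [one_div] using hinv.fun_neg
  have h2 : HasDerivAt (fun y : ℝ => -(2 / y)) (2 * (x ^ 2)⁻¹) x := by
    have := (hinv.const_mul (2 : ℝ)).fun_neg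
    simpa [div_eq_mul_inv, mul_comm] using this
  have hu : HasDerivAt (fun y : ℝ => Real.exp (-(1 / y)))
      (Real.exp (-(1 / x)) * (x ^ 2)⁻¹) x := h1.exp
  have hv : HasDerivAt (fun y : ℝ => Real.exp (-(2 / y)))
      (Real.exp (-(2 / x)) * (2 * (x ^ 2)⁻¹)) x := h2.exp
  have hid : HasDerivAt (fun y : ℝ => y) 1 x := hasDerivAt_id x
  have hsq : HasDerivAt (fun y : ℝ => y ^ 2) (2 * x) x := by
    simpa using hasDerivAt_pow 2 x
  have hA : HasDerivAt (fun y : ℝ => 2 * y * Real.exp (-(1 / y)))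
      ((2 * 1) * Real.exp (-(1 / x)) + 2 * x * (Real.exp (-(1 / x)) * (x ^ 2)⁻¹)) x :=
    ((hid.const_mul 2).mul hu)
  have hB : HasDerivAt (fun y : ℝ => y ^ 2 * Real.exp (-(2 / y)))
      (2 * x * Real.exp (-(2 / x)) + x ^ 2 * (Real.exp (-(2 / x)) * (2 * (x ^ 2)⁻¹))) x :=
    hsq.mul hv
  have hC : HasDerivAt (fun y : ℝ => y ^ 2 * Real.exp (-(1 / y)))
      (2 * x * Real.exp (-(1 / x)) + x ^ 2 * (Real.exp (-(1 / x)) * (x ^ 2)⁻¹)) x :=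
    hsq.mul hu
  have := ((hA.add hB).sub_const 1).sub hC
  convert this using 1
  · rfl
  · rfl
  · rfl
  · field_simp
    ring

lemma xiH_exp_lb (x : ℝ) (h1 : 3 / 2 ≤ x) : (51 : ℝ) / 100 < Real.exp (-(1 / x)) := by
  have hx : 0 < x := lt_of_lt_of_le (by norm_num) h1
  have hle : 1 / x ≤ 2 / 3 := by
    rw [div_le_div_iff₀ hx (by norm_num)]; linarith
  have hmono : Real.exp (-(2 / 3)) ≤ Real.exp (-(1 / x)) :=
    Real.exp_le_exp.2 (by linarith)
  have ht : Real.exp (2 / 3) < 100 / 51 := by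
    by_contra hcon
    push_neg at hcon
    have h3 : ((100 : ℝ) / 51) ^ 3 ≤ Real.exp (2 / 3) ^ 3 :=
      pow_le_pow_left₀ (by norm_num) hcon 3
    have he2 : Real.exp (2 / 3) ^ 3 = Real.exp 2 := by
      rw [← Real.exp_nat_mul]; norm_num
    have he1 : Real.exp 2 = Real.exp 1 ^ 2 := by
      rw [← Real.exp_nat_mul]; norm_num
    have := Real.exp_one_lt_d9
    rw [he2, he1] at h3
    nlinarith [Real.exp_pos 1]
  have : (51 : ℝ) / 100 < Real.exp (-(2 / 3)) := by
    rw [Real.exp_neg, lt_inv_comm₀ (by norm_num) (Real.exp_pos _)]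
    simpa using ht
  linarith

lemma xiH_strictMono : StrictMonoOn xiH (Set.Icc (3 / 2 : ℝ) 2) := by
  apply strictMonoOn_of_deriv_pos (convex_Icc _ _)
  · intro x hx
    have hx0 : 0 < x := lt_of_lt_of_le (by norm_num) hx.1
    exact (xiH_hasDerivAt x hx0).continuousAt.continuousWithinAt
  · intro x hx
    rw [interior_Icc] at hx
    have hx1 : 3 / 2 ≤ x := le_of_lt hx.1
    have hx2 : x ≤ 2 := le_of_lt hx.2
    have hx0 : 0 < x := by linarith
    rw [(xiH_hasDerivAt x hx0).deriv]
    have hu := xiH_exp_lb x hx1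
    have hupos : 0 < Real.exp (-(1 / x)) := Real.exp_pos _
    have hvu : Real.exp (-(2 / x)) = Real.exp (-(1 / x)) ^ 2 := by
      rw [← Real.exp_nat_mul]; ring_nf
    rw [hvu]
    set u := Real.exp (-(1 / x)) with hudef
    have hdiv : 2 / x ≤ 4 / 3 := by
      rw [div_le_div_iff₀ hx0 (by norm_num)]; linarith
    have hdiv2 : 1 ≤ 2 / x := by
      rw [le_div_iff₀ hx0]; linarith
    nlinarith [mul_pos (show (0:ℝ) < u - 51/100 by linarith)
        (show (0:ℝ) < 2 * x ^ 2 + 2 * x by nlinarith),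
      mul_nonneg (show (0:ℝ) ≤ 2 - x by linarith)
        (show (0:ℝ) ≤ 49 * x - 3 by linarith),
      mul_pos hx0 hupos, sq_nonneg u]

lemma xiH_eq (x d : ℝ) (hd : 0 < d)
    (h : d * (2 * x * Real.exp (1 / x) + x ^ 2 - Real.exp (2 / x)
        - x ^ 2 * Real.exp (1 / x)) = Real.exp (2 / x)) :
    xiH x = 1 / d := by
  have h1 : Real.exp (1 / x) * Real.exp (-(2 / x)) = Real.exp (-(1 / x)) := by
    rw [← Real.exp_add]; ring_nf
  have h2 : Real.exp (2 / x) * Real.exp (-(2 / x)) = 1 := by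
    rw [← Real.exp_add]; simp
  have hid : xiH x = (2 * x * Real.exp (1 / x) + x ^ 2 - Real.exp (2 / x)
      - x ^ 2 * Real.exp (1 / x)) * Real.exp (-(2 / x)) := by
    unfold xiH
    linear_combination (x ^ 2 - 2 * x) * h1 + h2
  have : d * xiH x = 1 := by
    rw [hid, ← mul_assoc, h, h2]
  field_simp
  linarith [this]

/-- `Ξ_d` is decreasing in `d`. -/
theorem xi_decreasing (d₁ d₂ : ℝ) (hd₁ : 2 ≤ d₁) (hd : d₁ ≤ d₂)
    (Ξ₁ Ξ₂ : ℝ)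
    (hΞ₁mem : Ξ₁ ∈ Set.Icc (3 / 2 : ℝ) 2) (hΞ₂mem : Ξ₂ ∈ Set.Icc (3 / 2 : ℝ) 2)
    (hΞ₁ : d₁ * (2 * Ξ₁ * Real.exp (1 / Ξ₁) + Ξ₁ ^ 2 - Real.exp (2 / Ξ₁)
        - Ξ₁ ^ 2 * Real.exp (1 / Ξ₁)) = Real.exp (2 / Ξ₁))
    (hΞ₂ : d₂ * (2 * Ξ₂ * Real.exp (1 / Ξ₂) + Ξ₂ ^ 2 - Real.exp (2 / Ξ₂)
        - Ξ₂ ^ 2 * Real.exp (1 / Ξ₂)) = Real.exp (2 / Ξ₂)) :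
    Ξ₂ ≤ Ξ₁ := by
  have hd₁0 : 0 < d₁ := by linarith
  have hd₂0 : 0 < d₂ := by linarith
  have e₁ : xiH Ξ₁ = 1 / d₁ := xiH_eq Ξ₁ d₁ hd₁0 hΞ₁
  have e₂ : xiH Ξ₂ = 1 / d₂ := xiH_eq Ξ₂ d₂ hd₂0 hΞ₂
  have hle : xiH Ξ₂ ≤ xiH Ξ₁ := by
    rw [e₁, e₂]
    exact one_div_le_one_div_of_le hd₁0 hd
  by_contra hcon
  push_neg at hcon
  exact absurd (xiH_strictMono hΞ₁mem hΞ₂mem hcon) (not_lt.2 hle)
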